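/- (Δ-System Lemma for ℵ₁) Let 𝒜 be a family of finite sets with |𝒜| = ℵ₁. Then there exists a subfamily 𝒟 ⊆ 𝒜 with |𝒟| = ℵ₁ and a set r (the root) such that for all a, b ∈ 𝒟 with a ≠ b, a ∩ b = r. -/

import Mathlib

open Cardinal

/-- Uncountability of a set as `ℵ₁ ≤ #s`. -/
private lemma aleph_one_le_of_not_countable {α : Type*} {s : Set α}
    (h : ¬ s.Countable) : Cardinal.aleph 1 ≤ Cardinal.mk ↥s := by
  rw [Cardinal.countable_iff_lt_aleph_one, not_lt] at h
  exact h

/-- shrink to exactly ℵ₁ -/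
private lemma exists_subset_mk_eq {α : Type*} {s : Set α}
    (h : Cardinal.aleph 1 ≤ Cardinal.mk ↥s) :
    ∃ t ⊆ s, Cardinal.mk ↥t = Cardinal.aleph 1 := by
  obtain ⟨t, hts, ht⟩ := Cardinal.le_mk_iff_exists_subset.1 h
  exact ⟨t, hts, ht⟩

private lemma delta_key {α : Type*} (n : ℕ) :
    ∀ (𝒜 : Set (Set α)), (∀ a ∈ 𝒜, a.Finite) → (∀ a ∈ 𝒜, a.ncard = n) →
    Cardinal.aleph 1 ≤ Cardinal.mk ↥𝒜 →
    ∃ 𝒟 ⊆ 𝒜, Cardinal.mk ↥𝒟 = Cardinal.aleph 1 ∧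
      ∃ root : Set α, ∀ a ∈ 𝒟, ∀ b ∈ 𝒟, a ≠ b → a ∩ b = root := by
  induction n with
  | zero =>
    intro 𝒜 hfin hn hcard
    exfalso
    have hsub : 𝒜 ⊆ {∅} := by
      intro a ha
      have := hn a ha
      have : a = ∅ := (Set.ncard_eq_zero (hfin a ha)).1 this
      simp [this]
    have : (𝒜).Countable := (Set.countable_singleton ∅).mono hsub
    rw [Cardinal.countable_iff_lt_aleph_one] at this
    exact absurd hcard this.not_ge
  | succ n ih =>
    intro 𝒜 hfin hn hcard
    by_cases hx : ∃ x : α, ¬ {a ∈ 𝒜 | x ∈ a}.Countable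
    · -- Case 1: some x is in uncountably many members
      obtain ⟨x, hx⟩ := hx
      set 𝒜' : Set (Set α) := {a ∈ 𝒜 | x ∈ a} with h𝒜'
      have hinj : Set.InjOn (fun a => a \ {x}) 𝒜' := by
        intro a ha b hb hab
        change a \ {x} = b \ {x} at hab
        have : (a \ {x}) ∪ {x} = (b \ {x}) ∪ {x} := by rw [hab]
        rwa [Set.diff_union_of_subset (by simpa using ha.2),
          Set.diff_union_of_subset (by simpa using hb.2)] at this
      set ℬ : Set (Set α) := (fun a => a \ {x}) '' 𝒜' with hℬ
      have hcardB : Cardinal.aleph 1 ≤ Cardinal.mk ↥ℬ := by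
        rw [Cardinal.mk_image_eq_of_injOn _ _ hinj]
        exact aleph_one_le_of_not_countable hx
      have hfinB : ∀ b ∈ ℬ, b.Finite := by
        rintro b ⟨a, ha, rfl⟩
        exact (hfin a ha.1).diff
      have hnB : ∀ b ∈ ℬ, b.ncard = n := by
        rintro b ⟨a, ha, rfl⟩
        have hfa := hfin a ha.1
        have hna := hn a ha.1
        have hd : a.ncard = (a \ {x}).ncard + 1 :=
          (Set.ncard_diff_singleton_add_one ha.2 hfa).symm
        show (a \ {x}).ncard = n
        omega
      obtain ⟨𝒟', h𝒟'B, h𝒟'card, r, hr⟩ := ih ℬ hfinB hnB hcardB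
      -- pull back
      set 𝒟 : Set (Set α) := {a ∈ 𝒜' | a \ {x} ∈ 𝒟'} with h𝒟
      have hbij : Set.BijOn (fun a => a \ {x}) 𝒟 𝒟' := by
        refine ⟨fun a ha => ha.2, hinj.mono (fun a ha => ha.1), ?_⟩
        intro b hb
        obtain ⟨a, ha, rfl⟩ := h𝒟'B hb
        exact ⟨a, ⟨ha, hb⟩, rfl⟩
      have hcard𝒟 : Cardinal.mk ↥𝒟 = Cardinal.aleph 1 := by
        rw [← h𝒟'card]
        exact Cardinal.mk_congr (Set.BijOn.equiv _ hbij)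
      refine ⟨𝒟, fun a ha => ha.1.1, hcard𝒟, r ∪ {x}, ?_⟩
      intro a ha b hb hab
      have hxab : x ∈ a ∧ x ∈ b := ⟨ha.1.2, hb.1.2⟩
      have hne : a \ {x} ≠ b \ {x} := by
        intro h
        exact hab (hinj.mono (fun a ha => ha.1) ha hb h)
      have := hr _ ha.2 _ hb.2 hne
      have hsplit : a ∩ b = ((a \ {x}) ∩ (b \ {x})) ∪ {x} := by
        ext y
        by_cases hy : y = x <;> simp [Set.mem_diff, hy, hxab.1, hxab.2]
      rw [hsplit, this]
    · -- Case 2: every element in only countably many members; Zorn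
      push_neg at hx
      have hzorn : ∃ 𝒟, Maximal (fun D => D ⊆ 𝒜 ∧ D.Pairwise fun a b => a ∩ b = ∅) 𝒟 := by
        apply zorn_subset
        intro c hc hchain
        refine ⟨⋃₀ c, ⟨?_, ?_⟩, fun s hs => Set.subset_sUnion_of_mem hs⟩
        · exact Set.sUnion_subset fun s hs => (hc hs).1
        · intro a ha b hb hab
          obtain ⟨s, hs, has⟩ := ha
          obtain ⟨t, ht, hbt⟩ := hb
          rcases hchain.total hs ht with h | h
          · exact (hc ht).2 (h has) hbt hab
          · exact (hc hs).2 has (h hbt) hab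
      obtain ⟨𝒟, hmax⟩ := hzorn
      obtain ⟨h𝒟A, h𝒟pw⟩ := hmax.1
      -- 𝒟 is uncountable
      have hunc : ¬ 𝒟.Countable := by
        intro hc
        -- the set of members of 𝒜 meeting some element of ⋃ 𝒟
        have hM : 𝒜 ⊆ 𝒟 ∪ ⋃ d ∈ 𝒟, ⋃ x ∈ d, {a ∈ 𝒜 | x ∈ a} := by
          intro a ha
          by_cases hd : a ∈ 𝒟
          · exact Or.inl hd
          by_cases hm : ∃ d ∈ 𝒟, (a ∩ d).Nonempty
          · obtain ⟨d, hd𝒟, y, hya, hyd⟩ := hm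
            exact Or.inr (Set.mem_biUnion hd𝒟 (Set.mem_biUnion hyd ⟨ha, hya⟩))
          · exfalso
            push_neg at hm
            have hins : insert a 𝒟 ⊆ 𝒜 ∧ (insert a 𝒟).Pairwise fun s t => s ∩ t = ∅ := by
              constructor
              · exact Set.insert_subset ha h𝒟A
              · apply h𝒟pw.insert
                intro t ht hat
                constructor
                · exact hm t ht
                · rw [Set.inter_comm]
                  exact hm t ht
            have := hmax.2 hins (Set.subset_insert _ _)
            exact hd (this (Set.mem_insert _ _))
        have hcnt : (𝒟 ∪ ⋃ d ∈ 𝒟, ⋃ x ∈ d, {a ∈ 𝒜 | x ∈ a}).Countable := by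
          apply hc.union
          apply hc.biUnion
          intro d hd
          exact Set.Countable.biUnion ((hfin d (h𝒟A hd)).countable) fun x _ => hx x
        have : 𝒜.Countable := hcnt.mono hM
        rw [Cardinal.countable_iff_lt_aleph_one] at this
        exact absurd hcard this.not_ge
      obtain ⟨𝒟₀, h𝒟₀, hcard₀⟩ := exists_subset_mk_eq (aleph_one_le_of_not_countable hunc)
      refine ⟨𝒟₀, fun a ha => h𝒟A (h𝒟₀ ha), hcard₀, ∅, ?_⟩
      intro a ha b hb hab
      exact h𝒟pw (h𝒟₀ ha) (h𝒟₀ hb) hab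

/-- Δ-System Lemma for `ℵ₁`: a family of finite sets of cardinality `ℵ₁`
has a subfamily of cardinality `ℵ₁` forming a Δ-system with some root `r`. -/
theorem delta_system_lemma_aleph_one {α : Type*} (𝒜 : Set (Set α))
    (hfin : ∀ a ∈ 𝒜, a.Finite) (hcard : Cardinal.mk ↥𝒜 = Cardinal.aleph 1) :
    ∃ 𝒟 ⊆ 𝒜, Cardinal.mk ↥𝒟 = Cardinal.aleph 1 ∧
      ∃ root : Set α, ∀ a ∈ 𝒟, ∀ b ∈ 𝒟, a ≠ b → a ∩ b = root := by
  by_cases hn : ∃ n : ℕ, ¬ {a ∈ 𝒜 | a.ncard = n}.Countable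
  · obtain ⟨n, hn⟩ := hn
    obtain ⟨𝒟, h𝒟, hc, r, hr⟩ := delta_key n {a ∈ 𝒜 | a.ncard = n}
      (fun a ha => hfin a ha.1) (fun a ha => ha.2)
      (aleph_one_le_of_not_countable hn)
    exact ⟨𝒟, fun a ha => (h𝒟 ha).1, hc, r, hr⟩
  · exfalso
    push_neg at hn
    have hsub : 𝒜 ⊆ ⋃ n : ℕ, {a ∈ 𝒜 | a.ncard = n} := by
      intro a ha
      exact Set.mem_iUnion.2 ⟨a.ncard, ha, rfl⟩
    have : 𝒜.Countable := (Set.countable_iUnion hn).mono hsub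
    rw [Cardinal.countable_iff_lt_aleph_one] at this
    rw [hcard] at this
    exact this.false
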